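/- Let N ≥ 1 and let p : {1,…,N} → [0,1] be a function. Choose a random subset A ⊆ {1,…,N} by including each n independently with probability p(n), and set X_n = 1_A(n) − p(n). Then the expectation of (1/N³) · Σ_{n₁+n₂=n₃+n₄, n_i ∈ {1,…,N}} X_{n₁} X_{n₂} X_{n₃} X_{n₄} is O(1/N). -/

import Mathlib

open MeasureTheory

section Aux
variable {Ω : Type} [MeasurableSpace Ω] {μ : Measure Ω} [IsProbabilityMeasure μ]
  {X : ℕ → Ω → ℝ}

lemma aux_indep3 (hind : ProbabilityTheory.iIndepFun X μ)
    (hm : ∀ n, Measurable (X n)) {i a b c : ℕ} (hia : i ≠ a) (hib : i ≠ b) (hic : i ≠ c) :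
    ProbabilityTheory.IndepFun (X i) (fun ω => X a ω * X b ω * X c ω) μ := by
  classical
  have h := hind.indepFun_finset {i} ({a, b, c} : Finset ℕ)
    (by simp [Finset.disjoint_left, hia, hib, hic]) hm
  have := h.comp (φ := fun v : (∀ x : ({i} : Finset ℕ), ℝ) => v ⟨i, by simp⟩)
    (ψ := fun v : (∀ x : ({a, b, c} : Finset ℕ), ℝ) =>
      v ⟨a, by simp⟩ * v ⟨b, by simp⟩ * v ⟨c, by simp⟩)
    (_mγ := inferInstance) (_mγ' := inferInstance)
    (measurable_pi_apply _) (by fun_prop)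
  exact this

lemma aux_int3 (hm : ∀ n, Measurable (X n)) (hb : ∀ n ω, |X n ω| ≤ 1) (a b c : ℕ) :
    Integrable (fun ω => X a ω * X b ω * X c ω) μ := by
  apply Integrable.mono' (integrable_const (1 : ℝ))
    ((((hm a).mul (hm b)).mul (hm c)).aestronglyMeasurable)
  filter_upwards with ω
  have := hb a ω; have := hb b ω; have := hb c ω
  calc ‖X a ω * X b ω * X c ω‖ = |X a ω| * |X b ω| * |X c ω| := by
        simp [Real.norm_eq_abs, abs_mul]
    _ ≤ 1 * 1 * 1 := by gcongr <;> positivity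
    _ = 1 := by ring

lemma aux_zero (hind : ProbabilityTheory.iIndepFun X μ)
    (hm : ∀ n, Measurable (X n)) (hb : ∀ n ω, |X n ω| ≤ 1) (hz : ∀ n, ∫ ω, X n ω ∂μ = 0)
    {i a b c : ℕ} (hia : i ≠ a) (hib : i ≠ b) (hic : i ≠ c) :
    ∫ ω, X i ω * (X a ω * X b ω * X c ω) ∂μ = 0 := by
  have h := (aux_indep3 hind hm hia hib hic).integral_mul_eq_mul_integral
    ((hm i).aestronglyMeasurable)
    ((((hm a).mul (hm b)).mul (hm c)).aestronglyMeasurable)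
  rw [show (fun ω => X i ω * (X a ω * X b ω * X c ω)) =
      X i * fun ω => X a ω * X b ω * X c ω from rfl] at *
  rw [h, hz i, zero_mul]

end Aux

/-- If `A ⊆ {1,…,N}` is chosen randomly with `ℙ(n ∈ A) = p n` independently and
`X n = 1_A(n) − p n`, then the expectation of
`(1/N³) Σ_{n₁+n₂=n₃+n₄} X_{n₁} X_{n₂} X_{n₃} X_{n₄}` is `O(1/N)`. -/
theorem stmt_5 : ∃ C : ℝ, 0 < C ∧ ∀ (N : ℕ), 1 ≤ N →
    ∀ (Ω : Type) (_ : MeasurableSpace Ω) (μ : Measure Ω),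
    IsProbabilityMeasure μ →
    ∀ X : ℕ → Ω → ℝ, ProbabilityTheory.iIndepFun X μ →
    (∀ n, Measurable (X n)) → (∀ n ω, |X n ω| ≤ 1) →
    (∀ n, ∫ ω, X n ω ∂μ = 0) →
    (1 / (N : ℝ) ^ 3) * ∑ n₁ ∈ Finset.Icc 1 N, ∑ n₂ ∈ Finset.Icc 1 N,
      ∑ n₃ ∈ Finset.Icc 1 N, ∑ n₄ ∈ Finset.Icc 1 N,
      (if n₁ + n₂ = n₃ + n₄ then ∫ ω, X n₁ ω * X n₂ ω * X n₃ ω * X n₄ ω ∂μ else 0)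
      ≤ C / N := by
  refine ⟨2, by norm_num, ?_⟩
  intro N hN Ω _ μ hμ X hind hm hb hz
  have hNpos : (0 : ℝ) < N := by exact_mod_cast hN
  -- each term is bounded by the diagonal indicator
  have key : ∀ n₁ n₂ n₃ n₄ : ℕ,
      (if n₁ + n₂ = n₃ + n₄ then ∫ ω, X n₁ ω * X n₂ ω * X n₃ ω * X n₄ ω ∂μ else 0)
      ≤ (if n₃ = n₁ ∧ n₄ = n₂ then 1 else 0) + (if n₃ = n₂ ∧ n₄ = n₁ then (1:ℝ) else 0) := by
    intro n₁ n₂ n₃ n₄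
    by_cases hs : n₁ + n₂ = n₃ + n₄
    · simp only [if_pos hs]
      by_cases hd : (n₃ = n₁ ∧ n₄ = n₂) ∨ (n₃ = n₂ ∧ n₄ = n₁)
      · -- bound integral by 1
        have h1 : ∫ ω, X n₁ ω * X n₂ ω * X n₃ ω * X n₄ ω ∂μ ≤ 1 := by
          have hint : Integrable (fun ω => X n₁ ω * X n₂ ω * X n₃ ω * X n₄ ω) μ := by
            apply Integrable.mono' (integrable_const (1 : ℝ))
              (((((hm n₁).mul (hm n₂)).mul (hm n₃)).mul (hm n₄)).aestronglyMeasurable)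
            filter_upwards with ω
            calc ‖X n₁ ω * X n₂ ω * X n₃ ω * X n₄ ω‖
                = |X n₁ ω| * |X n₂ ω| * |X n₃ ω| * |X n₄ ω| := by
                  simp [Real.norm_eq_abs, abs_mul]
              _ ≤ 1 * 1 * 1 * 1 := by
                  gcongr <;> first | exact hb _ _ | positivity
              _ = 1 := by ring
          calc ∫ ω, X n₁ ω * X n₂ ω * X n₃ ω * X n₄ ω ∂μ
              ≤ ∫ _, (1 : ℝ) ∂μ := by
                refine integral_mono hint (integrable_const 1) fun ω => ?_
                calc X n₁ ω * X n₂ ω * X n₃ ω * X n₄ ω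
                    ≤ |X n₁ ω * X n₂ ω * X n₃ ω * X n₄ ω| := le_abs_self _
                  _ = |X n₁ ω| * |X n₂ ω| * |X n₃ ω| * |X n₄ ω| := by simp [abs_mul]
                  _ ≤ 1 * 1 * 1 * 1 := by gcongr <;> first | exact hb _ _ | positivity
                  _ = 1 := by ring
            _ = 1 := by simp
        split_ifs with hA hB hB <;> first | linarith | tauto
      · -- off-diagonal: integral is zero
        push_neg at hd
        have h13 : n₁ ≠ n₃ := by
          rintro rfl
          have : n₂ = n₄ := by omega
          exact (hd.1 rfl this.symm).elim
        have h14 : n₁ ≠ n₄ := by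
          rintro rfl
          have : n₂ = n₃ := by omega
          exact (hd.2 this.symm rfl).elim
        have h23 : n₂ ≠ n₃ := by
          rintro rfl
          have : n₁ = n₄ := by omega
          exact (hd.2 rfl this.symm).elim
        have h24 : n₂ ≠ n₄ := by
          rintro rfl
          have : n₁ = n₃ := by omega
          exact (hd.1 this.symm rfl).elim
        have hzero : ∫ ω, X n₁ ω * X n₂ ω * X n₃ ω * X n₄ ω ∂μ = 0 := by
          by_cases h12 : n₁ = n₂
          · -- then n₃ ≠ n₄, and n₃ is the singleton
            have h34 : n₃ ≠ n₄ := by omega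
            have := aux_zero hind hm hb hz h23.symm
              (i := n₃) (a := n₂) (b := n₁) (c := n₄) h13.symm h34
            rw [← this]
            congr 1; funext ω; ring
          · have := aux_zero hind hm hb hz
              (i := n₁) (a := n₂) (b := n₃) (c := n₄) h12 h13 h14
            rw [← this]
            congr 1; funext ω; ring
        rw [hzero]
        have : (0:ℝ) ≤ if n₃ = n₁ ∧ n₄ = n₂ then (1:ℝ) else 0 := by positivity
        have : (0:ℝ) ≤ if n₃ = n₂ ∧ n₄ = n₁ then (1:ℝ) else 0 := by positivity
        positivity
    · rw [if_neg hs]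
      have : (0:ℝ) ≤ if n₃ = n₁ ∧ n₄ = n₂ then (1:ℝ) else 0 := by positivity
      have : (0:ℝ) ≤ if n₃ = n₂ ∧ n₄ = n₁ then (1:ℝ) else 0 := by positivity
      positivity
  have hsum : (∑ n₁ ∈ Finset.Icc 1 N, ∑ n₂ ∈ Finset.Icc 1 N,
      ∑ n₃ ∈ Finset.Icc 1 N, ∑ n₄ ∈ Finset.Icc 1 N,
      (if n₁ + n₂ = n₃ + n₄ then ∫ ω, X n₁ ω * X n₂ ω * X n₃ ω * X n₄ ω ∂μ else 0))
      ≤ (N : ℝ) ^ 2 * 2 := by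
    calc _ ≤ ∑ n₁ ∈ Finset.Icc 1 N, ∑ n₂ ∈ Finset.Icc 1 N,
        ∑ n₃ ∈ Finset.Icc 1 N, ∑ n₄ ∈ Finset.Icc 1 N,
        ((if n₃ = n₁ ∧ n₄ = n₂ then 1 else 0) + (if n₃ = n₂ ∧ n₄ = n₁ then (1:ℝ) else 0)) := by
          gcongr with n₁ _ n₂ _ n₃ _ n₄ _; exact key n₁ n₂ n₃ n₄
      _ ≤ ∑ n₁ ∈ Finset.Icc 1 N, ∑ n₂ ∈ Finset.Icc 1 N, (2 : ℝ) := by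
          gcongr with n₁ _ n₂ _
          have e1 : ∀ n₃, (∑ n₄ ∈ Finset.Icc 1 N,
              ((if n₃ = n₁ ∧ n₄ = n₂ then 1 else 0) + (if n₃ = n₂ ∧ n₄ = n₁ then (1:ℝ) else 0)))
              ≤ (if n₃ = n₁ then 1 else 0) + (if n₃ = n₂ then (1:ℝ) else 0) := by
            intro n₃
            rw [Finset.sum_add_distrib]
            gcongr
            · simp only [ite_and]
              by_cases h : n₃ = n₁
              · simp only [if_pos h]
                rw [Finset.sum_ite_eq' (Finset.Icc 1 N) n₂ (fun _ => (1:ℝ))]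
                split <;> norm_num
              · simp [h]
            · simp only [ite_and]
              by_cases h : n₃ = n₂
              · simp only [if_pos h]
                rw [Finset.sum_ite_eq' (Finset.Icc 1 N) n₁ (fun _ => (1:ℝ))]
                split <;> norm_num
              · simp [h]
          calc ∑ n₃ ∈ Finset.Icc 1 N, ∑ n₄ ∈ Finset.Icc 1 N,
              ((if n₃ = n₁ ∧ n₄ = n₂ then 1 else 0) + (if n₃ = n₂ ∧ n₄ = n₁ then (1:ℝ) else 0))
              ≤ ∑ n₃ ∈ Finset.Icc 1 N,
                ((if n₃ = n₁ then 1 else 0) + (if n₃ = n₂ then (1:ℝ) else 0)) := by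
                  gcongr with n₃ _; exact e1 n₃
            _ ≤ 2 := by
                rw [Finset.sum_add_distrib,
                  Finset.sum_ite_eq' (Finset.Icc 1 N) n₁ (fun _ => (1:ℝ)),
                  Finset.sum_ite_eq' (Finset.Icc 1 N) n₂ (fun _ => (1:ℝ))]
                split_ifs <;> norm_num
      _ = (N : ℝ) ^ 2 * 2 := by
          have hc : (Finset.Icc 1 N).card = N := by rw [Nat.card_Icc]; omega
          simp [Finset.sum_const, hc, nsmul_eq_mul]
          ring
  calc (1 / (N : ℝ) ^ 3) * ∑ n₁ ∈ Finset.Icc 1 N, ∑ n₂ ∈ Finset.Icc 1 N,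
      ∑ n₃ ∈ Finset.Icc 1 N, ∑ n₄ ∈ Finset.Icc 1 N,
      (if n₁ + n₂ = n₃ + n₄ then ∫ ω, X n₁ ω * X n₂ ω * X n₃ ω * X n₄ ω ∂μ else 0)
      ≤ (1 / (N : ℝ) ^ 3) * ((N : ℝ) ^ 2 * 2) := by
        apply mul_le_mul_of_nonneg_left hsum
        positivity
    _ = 2 / (N : ℝ) := by field_simp
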